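/- Let v ∈ C¹(Ω, ℝ) be a solution of the GHJB equation ⟨f(x)+g(x)u(x), ∇v(x)⟩ + h(x) + ⟨u(x), R u(x)⟩ = 0 on Ω, and define the updated controller u⁺(x) := −(1/2) R^{−1} g(x)^⊤ ∇v(x). Then along the closed-loop vector field f + g u⁺, the derivative of v satisfies ⟨f(x) + g(x)u⁺(x), ∇v(x)⟩ = −‖R^{1/2}(u⁺(x) − u(x))‖² − ‖R^{1/2} u⁺(x)‖² − h(x), which is strictly negative for all x ∈ Ω \ {0}. -/

import Mathlib

open Filter Metric
open scoped RealInnerProductSpace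

theorem stmt_10 {N M : ℕ}
    (Ω : Set (EuclideanSpace ℝ (Fin N)))
    (hΩopen : IsOpen Ω) (hΩconn : IsConnected Ω)
    (f : EuclideanSpace ℝ (Fin N) → EuclideanSpace ℝ (Fin N))
    (g : EuclideanSpace ℝ (Fin N) → (EuclideanSpace ℝ (Fin M) →L[ℝ] EuclideanSpace ℝ (Fin N)))
    (h : EuclideanSpace ℝ (Fin N) → ℝ)
    (hhpos : ∀ x, x ≠ 0 → 0 < h x)
    (R Rinv : EuclideanSpace ℝ (Fin M) →L[ℝ] EuclideanSpace ℝ (Fin M))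
    (hRsymm : ∀ a b, ⟪R a, b⟫ = ⟪a, R b⟫)
    (hRpos : ∀ a : EuclideanSpace ℝ (Fin M), a ≠ 0 → 0 < ⟪a, R a⟫)
    (hRinv : ∀ a, Rinv (R a) = a) (hRinv' : ∀ a, R (Rinv a) = a)
    (u : EuclideanSpace ℝ (Fin N) → EuclideanSpace ℝ (Fin M))
    (v : EuclideanSpace ℝ (Fin N) → ℝ)
    (hv : ContDiffOn ℝ 1 v Ω)
    -- `v` solves the GHJB equation associated with `u` on Ω
    (hGHJB : ∀ x ∈ Ω, ⟪f x + g x (u x), gradient v x⟫ + h x + ⟪u x, R (u x)⟫ = 0)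
    -- the updated controller
    (uplus : EuclideanSpace ℝ (Fin N) → EuclideanSpace ℝ (Fin M))
    (huplus : ∀ x, uplus x =
      -(1 / 2 : ℝ) • Rinv ((ContinuousLinearMap.adjoint (g x)) (gradient v x))) :
    ∀ x ∈ Ω,
      (⟪f x + g x (uplus x), gradient v x⟫ =
        -⟪uplus x - u x, R (uplus x - u x)⟫ - ⟪uplus x, R (uplus x)⟫ - h x) ∧
      (x ≠ 0 → ⟪f x + g x (uplus x), gradient v x⟫ < 0) := by
  intro x hx
  have hnn : ∀ a : EuclideanSpace ℝ (Fin M), 0 ≤ ⟪a, R a⟫ := by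
    intro a
    rcases eq_or_ne a 0 with rfl | ha
    · simp
    · exact (hRpos a ha).le
  set p := gradient v x with hp
  have key : (ContinuousLinearMap.adjoint (g x)) p = (-2 : ℝ) • R (uplus x) := by
    have h1 := congrArg R (huplus x)
    rw [map_smul, hRinv'] at h1
    rw [h1, smul_smul]
    norm_num
    rfl
  have hgap : ∀ a : EuclideanSpace ℝ (Fin M), ⟪g x a, p⟫ = -2 * ⟪a, R (uplus x)⟫ := by
    intro a
    rw [← ContinuousLinearMap.adjoint_inner_right, key, real_inner_smul_right]
  have hG := hGHJB x hx
  rw [inner_add_left, hgap] at hG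
  have hsym : ⟪uplus x, R (u x)⟫ = ⟪u x, R (uplus x)⟫ := by
    rw [real_inner_comm, hRsymm]
  have hmain : ⟪f x + g x (uplus x), gradient v x⟫ =
      -⟪uplus x - u x, R (uplus x - u x)⟫ - ⟪uplus x, R (uplus x)⟫ - h x := by
    rw [inner_add_left, hgap, map_sub, inner_sub_left, inner_sub_right, inner_sub_right]
    rw [← hp] at hG ⊢
    linarith [hsym]
  refine ⟨hmain, fun hx0 => ?_⟩
  rw [hmain]
  have := hhpos x hx0
  have := hnn (uplus x - u x)
  have := hnn (uplus x)
  linarith
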